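/- Let p be a prime with p ≡ 1 (mod 4). Then there are no integers a₁, a₂, a₃ with a₁² + 3a₂² + 3a₃² = p, a₃ odd, and a₁ + a₂ even. Equivalently, in the maximal order O of the quaternion algebra (−1,−3/Q), there is no pure quaternion α (i.e., Tr(α) = 0) of reduced norm p with α ≡ 1 mod 2O. -/

import Mathlib

open scoped Quaternion

/-- The element `x·1 + y·i + z·λ + t·μ` of `(−1,−3/ℚ)`, where `λ = (i+j)/2` and
`μ = (1+k)/2`, expressed in the coordinates `(re, imI, imJ, imK)`. -/
noncomputable def o3Elt (x y z t : ℤ) : ℍ[ℚ,-1,-3] :=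
  ⟨(x : ℚ) + (t : ℚ)/2, (y : ℚ) + (z : ℚ)/2, (z : ℚ)/2, (t : ℚ)/2⟩

/-- The maximal order of `(−1,−3/ℚ)` with `ℤ`-basis `{1, i, (i+j)/2, (1+k)/2}`. -/
def O3 : Set ℍ[ℚ,-1,-3] := {w | ∃ x y z t : ℤ, w = o3Elt x y z t}

lemma aux6 (p : ℕ) (h4 : p % 4 = 1) :
    ¬ ∃ a1 a2 a3 : ℤ, a1 ^ 2 + 3 * a2 ^ 2 + 3 * a3 ^ 2 = (p : ℤ) ∧
        Odd a3 ∧ Even (a1 + a2) := by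
  rintro ⟨a1, a2, a3, heq, ⟨k, hk⟩, ⟨m, hm⟩⟩
  have ha1 : a1 = m + m - a2 := by linarith
  subst hk ha1
  have key : (p : ℤ) = 4 * (m^2 - m*a2 + a2^2 + 3*k^2 + 3*k) + 3 := by
    rw [← heq]; ring
  obtain ⟨n, hn⟩ : ∃ n : ℤ, (p : ℤ) = 4 * n + 3 := ⟨_, key⟩
  omega

/-- If `p ≡ 1 (mod 4)` is prime, then there are no integers `a₁, a₂, a₃` with
`a₁² + 3a₂² + 3a₃² = p`, `a₃` odd and `a₁ + a₂` even; equivalently, there is no pure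
quaternion (reduced trace `0`) in the maximal order of `(−1,−3/ℚ)` of reduced norm `p`
congruent to `1` mod `2O`. -/
theorem stmt_6 (p : ℕ) (hp : p.Prime) (h4 : p % 4 = 1) :
    (¬ ∃ a1 a2 a3 : ℤ, a1 ^ 2 + 3 * a2 ^ 2 + 3 * a3 ^ 2 = (p : ℤ) ∧
        Odd a3 ∧ Even (a1 + a2)) ∧
      ¬ ∃ α : ℍ[ℚ,-1,-3], α ∈ O3 ∧ α + star α = 0 ∧ (α * star α).re = (p : ℚ) ∧
        ∃ w ∈ O3, α - 1 = 2 * w := by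
  refine ⟨aux6 p h4, ?_⟩
  rintro ⟨α, ⟨x, y, z, t, rfl⟩, hpure, hnorm, w, ⟨x', y', z', t', rfl⟩, hcong⟩
  have h2 : (2 : ℍ[ℚ,-1,-3]) = ((2:ℚ) : ℍ[ℚ,-1,-3]) := by norm_cast
  rw [h2] at hcong
  simp [o3Elt, QuaternionAlgebra.ext_iff, QuaternionAlgebra.re_ofNat, QuaternionAlgebra.imI_ofNat, QuaternionAlgebra.imJ_ofNat, QuaternionAlgebra.imK_ofNat] at hpure hnorm hcong
  obtain ⟨hc1, hc2, hc3, hc4⟩ := hcong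
  have hz : z = 2 * z' := by exact_mod_cast (by linarith : (z:ℚ) = 2*z')
  have ht : t = -(2 * x) := by exact_mod_cast (by linarith [hpure] : (t:ℚ) = -(2*x))
  subst hz ht
  push_cast at hnorm hc1 hc2 hc3 hc4
  have hx : x = 2 * x' + 1 := by exact_mod_cast (by linarith : (x:ℚ) = 2*x' + 1)
  have hy : y = 2 * y' := by exact_mod_cast (by linarith : (y:ℚ) = 2*y')
  refine aux6 p h4 ⟨y + z', z', x, ?_, ⟨x', hx⟩, ⟨y' + z', by omega⟩⟩
  have hq : ((y:ℚ) + z')^2 + 3*(z':ℚ)^2 + 3*(x:ℚ)^2 = (p:ℚ) := by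
    rw [← hnorm]; ring
  exact_mod_cast hq
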